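/- Let H₁, H₂ be Hilbert spaces, A₁ a positive self-adjoint operator on H₁, A₂ : H₁ → H₂ bounded (in the appropriate scale), C a bounded coupling operator, and τ > 0. Define on ℋ = D(A₁^{1/2}) × H₁ × H₂ × H₁ the operator 𝒜_d(u₁,u₂,v,w) = (u₂, −A₁u₁ − Cv, C*u₂ − A₂w, (1/τ)A₂*v − (1/τ)w) with the inner product whose fourth component carries weight τ. Then for every (u₁,u₂,v,w) in the domain of 𝒜_d, Re⟨𝒜_d(u₁,u₂,v,w), (u₁,u₂,v,w)⟩_ℋ = −‖w‖²_{H₁}; in particular 𝒜_d is dissipative. -/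

import Mathlib

theorem stmt_4 {H₁ H₂ : Type*}
    [NormedAddCommGroup H₁] [InnerProductSpace ℂ H₁] [CompleteSpace H₁]
    [NormedAddCommGroup H₂] [InnerProductSpace ℂ H₂] [CompleteSpace H₂]
    (S A₁ : H₁ →L[ℂ] H₁) (hS : ContinuousLinearMap.adjoint S = S)
    (hA₁ : A₁ = S.comp S)
    (A₂ : H₁ →L[ℂ] H₂) (C : H₂ →L[ℂ] H₁)
    (τ : ℝ) (hτ : 0 < τ)
    (u₁ u₂ w : H₁) (v : H₂) :
    ((inner ℂ (S u₂) (S u₁) : ℂ)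
      + (inner ℂ (-(A₁ u₁) - C v) u₂ : ℂ)
      + (inner ℂ ((ContinuousLinearMap.adjoint C) u₂ - A₂ w) v : ℂ)
      + (τ : ℂ) * (inner ℂ ((1 / (τ : ℂ)) • ((ContinuousLinearMap.adjoint A₂) v)
          - (1 / (τ : ℂ)) • w) w : ℂ)).re = -‖w‖ ^ 2 := by
  have hτ' : (τ : ℂ) ≠ 0 := by exact_mod_cast hτ.ne'
  have h1 : (inner ℂ (S u₂) (S u₁) : ℂ) = inner ℂ u₂ (A₁ u₁) := by
    rw [hA₁]
    nth_rewrite 1 [← hS]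
    rw [ContinuousLinearMap.adjoint_inner_left]
    simp
  have h2 : (inner ℂ ((ContinuousLinearMap.adjoint C) u₂) v : ℂ) = inner ℂ u₂ (C v) :=
    ContinuousLinearMap.adjoint_inner_left _ _ _
  have h3 : (inner ℂ ((ContinuousLinearMap.adjoint A₂) v) w : ℂ) = inner ℂ v (A₂ w) :=
    ContinuousLinearMap.adjoint_inner_left _ _ _
  have h4 : (inner ℂ (A₁ u₁) u₂ : ℂ) = starRingEnd ℂ (inner ℂ u₂ (A₁ u₁)) :=
    (inner_conj_symm _ _).symm
  have h5 : (inner ℂ (C v) u₂ : ℂ) = starRingEnd ℂ (inner ℂ u₂ (C v)) :=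
    (inner_conj_symm _ _).symm
  have h6 : (inner ℂ (A₂ w) v : ℂ) = starRingEnd ℂ (inner ℂ v (A₂ w)) :=
    (inner_conj_symm _ _).symm
  simp only [inner_sub_left, inner_neg_left, inner_smul_left, h1, h2, h3, h4, h5, h6,
    inner_self_eq_norm_sq_to_K, map_div₀, map_one, Complex.conj_ofReal]
  rw [mul_sub, ← mul_assoc, ← mul_assoc, mul_one_div_cancel hτ', one_mul, one_mul]
  set z₁ : ℂ := inner ℂ u₂ (A₁ u₁)
  set z₂ : ℂ := inner ℂ u₂ (C v)
  set z₃ : ℂ := inner ℂ v (A₂ w)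
  simp [Complex.add_re, Complex.sub_re, Complex.conj_re, Complex.mul_re]
  norm_cast
  ring
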